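/- Let a: ℤ → ℝ_{>0} be strictly monotonic, define the ratios r_k = a_{k−1}/a_k for k ∈ ℤ, and suppose r_0 > 1. Then a satisfies the T_1 equation of motion at every index if and only if for every k ∈ ℤ, r_k = r_0 or r_k = (r_0 + 1)/(r_0 − 1). -/

import Mathlib

/-- The `T₁` equation of motion at index `n` for the bi-infinite sequence of edge
lengths `a : ℤ → ℝ`. -/
def T1EoM (a : ℤ → ℝ) (n : ℤ) : Prop :=
  (a n)⁻¹ * (((a (n - 1))⁻¹ + (a n)⁻¹) ^ 2 / (((a (n - 1))⁻¹) ^ 2 + ((a n)⁻¹) ^ 2) ^ 2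
      + ((a n)⁻¹ + (a (n + 1))⁻¹) ^ 2 / (((a n)⁻¹) ^ 2 + ((a (n + 1))⁻¹) ^ 2) ^ 2)
    - ((a (n - 1))⁻¹ + (a n)⁻¹) / (((a (n - 1))⁻¹) ^ 2 + ((a n)⁻¹) ^ 2)
    - ((a n)⁻¹ + (a (n + 1))⁻¹) / (((a n)⁻¹) ^ 2 + ((a (n + 1))⁻¹) ^ 2) = 0

/-- auxiliary conserved quantity -/
noncomputable def t1Phi (s : ℝ) : ℝ := s * (s ^ 2 - 1) / (1 + s ^ 2) ^ 2

lemma t1Phi_eq_iff {s t : ℝ} (hs : 1 < s) (ht : 1 < t) :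
    t1Phi s = t1Phi t ↔ t = s ∨ t = (s + 1) / (s - 1) := by
  have hs0 : (0:ℝ) < 1 + s ^ 2 := by positivity
  have ht0 : (0:ℝ) < 1 + t ^ 2 := by positivity
  have hs1 : s - 1 ≠ 0 := by nlinarith
  have hQ : s ^ 2 * t ^ 2 + s ^ 2 * t + s * t ^ 2 + s + t - 1 ≠ 0 := by nlinarith
  unfold t1Phi
  rw [div_eq_div_iff (by positivity) (by positivity)]
  constructor
  · intro h
    have key : (s - t) * ((s - 1) * t - (s + 1)) *
        (s ^ 2 * t ^ 2 + s ^ 2 * t + s * t ^ 2 + s + t - 1) = 0 := by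
      linear_combination (-1 : ℝ) * h
    rcases mul_eq_zero.mp key with h1 | h1
    · rcases mul_eq_zero.mp h1 with h2 | h2
      · exact Or.inl (by linarith [sub_eq_zero.mp h2])
      · right
        rw [eq_div_iff hs1]
        linarith [sub_eq_zero.mp h2]
    · exact absurd h1 hQ
  · rintro (rfl | h)
    · ring
    · rw [eq_div_iff hs1] at h
      linear_combination (-(s - t) * (s ^ 2 * t ^ 2 + s ^ 2 * t + s * t ^ 2 + s + t - 1)) * h

lemma t1_eom_iff {x y z : ℝ} (hx : 0 < x) (hy : 0 < y) (hz : 0 < z) :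
    (y⁻¹ * ((x⁻¹ + y⁻¹) ^ 2 / ((x⁻¹) ^ 2 + (y⁻¹) ^ 2) ^ 2
        + (y⁻¹ + z⁻¹) ^ 2 / ((y⁻¹) ^ 2 + (z⁻¹) ^ 2) ^ 2)
      - (x⁻¹ + y⁻¹) / ((x⁻¹) ^ 2 + (y⁻¹) ^ 2)
      - (y⁻¹ + z⁻¹) / ((y⁻¹) ^ 2 + (z⁻¹) ^ 2) = 0)
      ↔ t1Phi (x / y) = t1Phi (y / z) := by
  have hx0 : x ≠ 0 := ne_of_gt hx
  have hy0 : y ≠ 0 := ne_of_gt hy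
  have hz0 : z ≠ 0 := ne_of_gt hz
  have hd1 : (x⁻¹) ^ 2 + (y⁻¹) ^ 2 ≠ 0 := by positivity
  have hd2 : (y⁻¹) ^ 2 + (z⁻¹) ^ 2 ≠ 0 := by positivity
  have hd3 : (1 + (x / y) ^ 2) ≠ 0 := by positivity
  have hd4 : (1 + (y / z) ^ 2) ≠ 0 := by positivity
  have key : y⁻¹ * ((x⁻¹ + y⁻¹) ^ 2 / ((x⁻¹) ^ 2 + (y⁻¹) ^ 2) ^ 2
        + (y⁻¹ + z⁻¹) ^ 2 / ((y⁻¹) ^ 2 + (z⁻¹) ^ 2) ^ 2)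
      - (x⁻¹ + y⁻¹) / ((x⁻¹) ^ 2 + (y⁻¹) ^ 2)
      - (y⁻¹ + z⁻¹) / ((y⁻¹) ^ 2 + (z⁻¹) ^ 2)
      = y * (t1Phi (x / y) - t1Phi (y / z)) := by
    unfold t1Phi
    field_simp
    ring
  rw [key, mul_eq_zero, sub_eq_zero]
  simp [hy0]

theorem t1_monotonic_solution_iff_ratios (a : ℤ → ℝ) (hpos : ∀ n, 0 < a n)
    (hmono : (∀ n, a n < a (n + 1)) ∨ (∀ n, a (n + 1) < a n))
    (r : ℤ → ℝ) (hr : ∀ k, r k = a (k - 1) / a k) (hr0 : 1 < r 0) :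
    (∀ n, T1EoM a n) ↔ ∀ k, r k = r 0 ∨ r k = (r 0 + 1) / (r 0 - 1) := by
  -- the sequence is decreasing
  have hdec : ∀ n, a (n + 1) < a n := by
    rcases hmono with h | h
    · exfalso
      have : a (0 - 1) < a 0 := by
        have := h (-1); simpa using this
      have : r 0 < 1 := by
        rw [hr 0]; exact (div_lt_one (hpos 0)).mpr this
      linarith
    · exact h
  have hr1 : ∀ k, 1 < r k := by
    intro k
    rw [hr k]
    rw [one_lt_div (hpos k)]
    have := hdec (k - 1)
    simpa using this
  have heom : ∀ n, T1EoM a n ↔ t1Phi (r n) = t1Phi (r (n + 1)) := by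
    intro n
    have h1 : r n = a (n - 1) / a n := hr n
    have h2 : r (n + 1) = a n / a (n + 1) := by
      rw [hr (n + 1)]; norm_num
    rw [h1, h2]
    exact t1_eom_iff (hpos (n - 1)) (hpos n) (hpos (n + 1))
  constructor
  · intro h k
    have hconst : ∀ k : ℤ, t1Phi (r k) = t1Phi (r 0) := by
      intro k
      induction k using Int.induction_on with
      | zero => rfl
      | succ i ih => rw [← (heom i).mp (h i)]; exact_mod_cast ih
      | pred i ih =>
        have := (heom (-(i : ℤ) - 1)).mp (h (-(i : ℤ) - 1))
        rw [show (-(i : ℤ) - 1 + 1) = -(i : ℤ) by ring] at this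
        rw [this]; exact_mod_cast ih
    have := (t1Phi_eq_iff (hr1 0) (hr1 k)).mp (hconst k).symm
    exact this
  · intro h n
    have hphp : ∀ k : ℤ, t1Phi (r k) = t1Phi (r 0) := by
      intro k
      rcases h k with hk | hk
      · rw [hk]
      · exact ((t1Phi_eq_iff (hr1 0) (hr1 k)).mpr (Or.inr hk)).symm
    rw [heom n, hphp n, hphp (n+1)]
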